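/- arXiv:0803.4224 — 2 statements merged into one kernel-verified Lean document; each statement's English description precedes it below -/
import Mathlib

section
/- Let Δx > 0, θ ≥ 1, and let s : ℝ → ℝ be twice continuously differentiable with |s''(x)| ≤ M for all x ∈ ℝ. For j ∈ ℤ set x_j = j·Δx and let S̄_j = (1/Δx)∫_{x_j−Δx/2}^{x_j+Δx/2} s(x) dx be the cell averages. Then the minmod numerical derivative (S_x)_j := MM( θ(S̄_{j+1} − S̄_j)/Δx , (S̄_{j+1} − S̄_{j−1})/(2Δx) , θ(S̄_j − S̄_{j−1})/Δx ) satisfies |(S_x)_j − s'(x_j)| ≤ 5θMΔx for every j ∈ ℤ; in particular the minmod-limited slope approximates ∂s/∂x at x_j to within O(Δx), which guarantees second-order accuracy of the reconstruction. -/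
open MeasureTheory intervalIntegral

/-- The minmod function: `MM(a₁,a₂,a₃) = min{aᵢ}` if all `aᵢ > 0`,
`max{aᵢ}` if all `aᵢ < 0`, and `0` otherwise. -/
noncomputable def minmod (a₁ a₂ a₃ : ℝ) : ℝ :=
  if 0 < a₁ ∧ 0 < a₂ ∧ 0 < a₃ then min a₁ (min a₂ a₃)
  else if a₁ < 0 ∧ a₂ < 0 ∧ a₃ < 0 then max a₁ (max a₂ a₃)
  else 0

lemma deriv_lip (s : ℝ → ℝ) (M : ℝ) (hs : ContDiff ℝ 2 s)
    (hM : ∀ x : ℝ, |iteratedDeriv 2 s x| ≤ M) (x y : ℝ) :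
    |deriv s y - deriv s x| ≤ M * |y - x| := by
  have h2 : ContDiff ℝ (1 + 1) s := by norm_num; exact hs
  rw [contDiff_succ_iff_deriv] at h2
  have h1 : ContDiff ℝ (0 + 1) (deriv s) := by norm_num; exact h2.2.2
  rw [contDiff_succ_iff_deriv] at h1
  have hd2 : Differentiable ℝ (deriv s) := h1.1
  have hb : ∀ z : ℝ, ‖deriv (deriv s) z‖ ≤ M := by
    intro z
    have := hM z
    rwa [iteratedDeriv_succ, iteratedDeriv_one] at this
  have := Convex.norm_image_sub_le_of_norm_deriv_le
    (fun z _ => (hd2 z)) (fun z _ => hb z) (convex_univ (𝕜 := ℝ) (E := ℝ))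
    (Set.mem_univ x) (Set.mem_univ y)
  simpa [Real.norm_eq_abs] using this

lemma taylor_bd (s : ℝ → ℝ) (M : ℝ) (hs : ContDiff ℝ 2 s)
    (hM : ∀ x : ℝ, |iteratedDeriv 2 s x| ≤ M) (x y : ℝ) :
    |s y - s x - deriv s x * (y - x)| ≤ M * (y - x)^2 := by
  have hd1 : Differentiable ℝ s := hs.differentiable (by norm_num)
  set g : ℝ → ℝ := fun t => s t - deriv s x * t with hg
  have hgd : ∀ t : ℝ, DifferentiableAt ℝ g t := fun t =>
    (hd1 t).sub ((differentiable_id.const_mul (deriv s x)) t)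
  have hgderiv : ∀ t : ℝ, deriv g t = deriv s t - deriv s x := by
    intro t
    have h1 : HasDerivAt (fun t : ℝ => deriv s x * t) (deriv s x) t := by
      simpa using (hasDerivAt_id t).const_mul (deriv s x)
    exact (((hd1 t).hasDerivAt).sub h1).deriv
  have hbound : ∀ t ∈ Set.uIcc x y, ‖deriv g t‖ ≤ M * |y - x| := by
    intro t ht
    rw [hgderiv, Real.norm_eq_abs]
    have h1 : |deriv s t - deriv s x| ≤ M * |t - x| := deriv_lip s M hs hM x t
    have h2 : |t - x| ≤ |y - x| := by
      rcases Set.mem_uIcc.mp ht with ⟨ha, hb⟩ | ⟨ha, hb⟩ <;>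
        rcases abs_cases (t - x) with ⟨e1, _⟩ | ⟨e1, _⟩ <;>
        rcases abs_cases (y - x) with ⟨e2, _⟩ | ⟨e2, _⟩ <;> linarith
    have hM0 : 0 ≤ M := le_trans (abs_nonneg _) (hM 0)
    calc |deriv s t - deriv s x| ≤ M * |t - x| := h1
      _ ≤ M * |y - x| := by nlinarith
  have := Convex.norm_image_sub_le_of_norm_deriv_le
    (fun t _ => hgd t) hbound (convex_uIcc x y) Set.left_mem_uIcc Set.right_mem_uIcc
  have h3 : g y - g x = s y - s x - deriv s x * (y - x) := by rw [hg]; ring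
  rw [Real.norm_eq_abs, Real.norm_eq_abs, h3] at this
  calc |s y - s x - deriv s x * (y - x)| ≤ M * |y - x| * |y - x| := this
    _ = M * (y - x)^2 := by rw [mul_assoc, ← abs_mul, ← sq, abs_sq]

lemma cell_avg_bd (s : ℝ → ℝ) (M Δx : ℝ) (hΔx : 0 < Δx) (hs : ContDiff ℝ 2 s)
    (hM : ∀ x : ℝ, |iteratedDeriv 2 s x| ≤ M) (c : ℝ) :
    |(1/Δx) * (∫ x in (c - Δx/2)..(c + Δx/2), s x) - s c| ≤ M * Δx^2 / 4 := by
  have hM0 : 0 ≤ M := le_trans (abs_nonneg _) (hM 0)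
  have hcont : Continuous s := hs.continuous
  set a := c - Δx/2 with ha
  set b := c + Δx/2 with hb
  have hia : IntervalIntegrable s volume a b := hcont.intervalIntegrable a b
  have hib2 : IntervalIntegrable (fun x : ℝ => deriv s c * (x - c)) volume a b :=
    Continuous.intervalIntegrable (by fun_prop) a b
  have hib : IntervalIntegrable (fun x : ℝ => s c + deriv s c * (x - c)) volume a b :=
    Continuous.intervalIntegrable (by fun_prop) a b
  have hI : (∫ x in a..b, (s x - (s c + deriv s c * (x - c))))
      = (∫ x in a..b, s x) - Δx * s c := by
    rw [intervalIntegral.integral_sub hia hib]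
    have h2 : (∫ x in a..b, (s c + deriv s c * (x - c))) = Δx * s c := by
      rw [intervalIntegral.integral_add (intervalIntegrable_const) hib2,
        intervalIntegral.integral_const_mul]
      have h3 : (∫ x in a..b, (x - c))
          = (∫ x in a..b, x) - (∫ x in a..b, (c:ℝ)) := by
        rw [intervalIntegral.integral_sub (intervalIntegrable_id) (intervalIntegrable_const)]
      rw [h3, integral_id, intervalIntegral.integral_const, intervalIntegral.integral_const]
      simp only [smul_eq_mul, ha, hb]
      ring
    rw [h2]
  have hptw : ∀ x ∈ Set.uIoc a b,
      ‖s x - (s c + deriv s c * (x - c))‖ ≤ M * (Δx/2)^2 := by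
    intro x hx
    rw [Set.uIoc_of_le (show a ≤ b by rw [ha, hb]; linarith)] at hx
    obtain ⟨h1, h2⟩ := hx
    rw [ha] at h1; rw [hb] at h2
    have hsq : (x - c)^2 ≤ (Δx/2)^2 := by nlinarith
    have ht := taylor_bd s M hs hM c x
    rw [Real.norm_eq_abs]
    calc |s x - (s c + deriv s c * (x - c))|
        = |s x - s c - deriv s c * (x - c)| := by congr 1; ring
      _ ≤ M * (x - c)^2 := ht
      _ ≤ M * (Δx/2)^2 := by nlinarith
  have hIb : |∫ x in a..b, (s x - (s c + deriv s c * (x - c)))| ≤ M * (Δx/2)^2 * Δx := by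
    have h := intervalIntegral.norm_integral_le_of_norm_le_const hptw
    rw [Real.norm_eq_abs] at h
    have hba : |b - a| = Δx := by
      rw [ha, hb, show c + Δx/2 - (c - Δx/2) = Δx by ring, abs_of_pos hΔx]
    rwa [hba] at h
  have heq : (1/Δx) * (∫ x in a..b, s x) - s c
      = (1/Δx) * (∫ x in a..b, (s x - (s c + deriv s c * (x - c)))) := by
    rw [hI]; field_simp
  rw [heq, abs_mul, abs_of_pos (show (0:ℝ) < 1/Δx by positivity)]
  calc (1/Δx) * |∫ x in a..b, (s x - (s c + deriv s c * (x - c)))|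
      ≤ (1/Δx) * (M * (Δx/2)^2 * Δx) := by
        apply mul_le_mul_of_nonneg_left hIb (by positivity)
    _ = M * Δx^2 / 4 := by
        rw [show M * (Δx/2)^2 * Δx = Δx * (M * Δx^2/4) by ring, ← mul_assoc, one_div,
          inv_mul_cancel₀ (ne_of_gt hΔx), one_mul]

lemma minmod_close (θ ε d b₁ b₂ b₃ : ℝ) (hθ : 1 ≤ θ)
    (h₁ : |b₁ - d| ≤ ε) (h₂ : |b₂ - d| ≤ ε) (h₃ : |b₃ - d| ≤ ε) :
    |minmod (θ * b₁) b₂ (θ * b₃) - d| ≤ ε := by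
  have hθ0 : (0:ℝ) < θ := lt_of_lt_of_le one_pos hθ
  rw [abs_le] at h₁ h₂ h₃
  unfold minmod
  split_ifs with hpos hneg
  · obtain ⟨p1, p2, p3⟩ := hpos
    have hb₁ : 0 < b₁ := by nlinarith
    have hb₃ : 0 < b₃ := by nlinarith
    rw [abs_le]
    constructor
    · have l1 : d - ε ≤ θ * b₁ := by nlinarith
      have l3 : d - ε ≤ θ * b₃ := by nlinarith
      have := le_min l1 (le_min (by linarith : d - ε ≤ b₂) l3)
      linarith
    · have := (min_le_right (θ*b₁) (min b₂ (θ*b₃))).trans (min_le_left b₂ (θ*b₃))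
      linarith
  · obtain ⟨p1, p2, p3⟩ := hneg
    have hb₁ : b₁ < 0 := by nlinarith
    have hb₃ : b₃ < 0 := by nlinarith
    rw [abs_le]
    constructor
    · have := (le_max_right (θ*b₁) (max b₂ (θ*b₃))).trans' (le_max_left b₂ (θ*b₃))
      linarith
    · have l1 : θ * b₁ ≤ d + ε := by nlinarith
      have l3 : θ * b₃ ≤ d + ε := by nlinarith
      have := max_le l1 (max_le (by linarith : b₂ ≤ d + ε) l3)
      linarith
  · have hle : θ*b₁ ≤ 0 ∨ b₂ ≤ 0 ∨ θ*b₃ ≤ 0 := by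
      by_contra hc; push_neg at hc; exact hpos ⟨hc.1, hc.2.1, hc.2.2⟩
    have hge : 0 ≤ θ*b₁ ∨ 0 ≤ b₂ ∨ 0 ≤ θ*b₃ := by
      by_contra hc; push_neg at hc; exact hneg ⟨hc.1, hc.2.1, hc.2.2⟩
    have hd1 : d ≤ ε := by
      rcases hle with h | h | h
      · nlinarith
      · linarith
      · nlinarith
    have hd2 : -ε ≤ d := by
      rcases hge with h | h | h
      · nlinarith
      · linarith
      · nlinarith
    rw [zero_sub, abs_neg, abs_le]
    exact ⟨by linarith, by linarith⟩

set_option maxHeartbeats 1000000 in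
/-- For a `C²` function `s` with `|s''| ≤ M`, the minmod-limited numerical derivative
computed from the cell averages `S̄_j` on a uniform grid of spacing `Δx`
approximates `s'(x_j)` to within `5θMΔx`, i.e. to `O(Δx)`, which guarantees
second-order accuracy of the MUSCL reconstruction. -/
theorem minmod_slope_second_order_accuracy
    (Δx θ M : ℝ) (hΔx : 0 < Δx) (hθ : 1 ≤ θ)
    (s : ℝ → ℝ) (hs : ContDiff ℝ 2 s)
    (hM : ∀ x : ℝ, |iteratedDeriv 2 s x| ≤ M)
    (Sbar : ℤ → ℝ)
    (hSbar : ∀ j : ℤ, Sbar j =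
      (1/Δx) * ∫ x in ((j : ℝ)*Δx - Δx/2)..((j : ℝ)*Δx + Δx/2), s x)
    (j : ℤ) :
    |minmod (θ * (Sbar (j+1) - Sbar j) / Δx)
            ((Sbar (j+1) - Sbar (j-1)) / (2*Δx))
            (θ * (Sbar j - Sbar (j-1)) / Δx)
      - deriv s ((j : ℝ)*Δx)| ≤ 5*θ*M*Δx := by
  have hM0 : 0 ≤ M := le_trans (abs_nonneg _) (hM 0)
  set X : ℝ := (j : ℝ) * Δx with hX
  set d : ℝ := deriv s X with hd
  -- cell average errors
  have hE : ∀ k : ℤ, |Sbar k - s ((k:ℝ)*Δx)| ≤ M * Δx^2 / 4 := by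
    intro k
    rw [hSbar k]
    exact cell_avg_bd s M Δx hΔx hs hM _
  have hE0 : |Sbar j - s X| ≤ M * Δx^2 / 4 := hE j
  have hEp : |Sbar (j+1) - s (X + Δx)| ≤ M * Δx^2 / 4 := by
    have := hE (j+1)
    rwa [show ((j+1 : ℤ):ℝ) * Δx = X + Δx by rw [hX]; push_cast; ring] at this
  have hEm : |Sbar (j-1) - s (X - Δx)| ≤ M * Δx^2 / 4 := by
    have := hE (j-1)
    rwa [show ((j-1 : ℤ):ℝ) * Δx = X - Δx by rw [hX]; push_cast; ring] at this
  -- Taylor errors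
  have hT1 : |s (X + Δx) - s X - d * Δx| ≤ M * Δx^2 := by
    have := taylor_bd s M hs hM X (X + Δx)
    rwa [show X + Δx - X = Δx by ring] at this
  have hT2 : |s (X - Δx) - s X + d * Δx| ≤ M * Δx^2 := by
    have := taylor_bd s M hs hM X (X - Δx)
    rw [show X - Δx - X = -Δx by ring] at this
    rw [show s (X - Δx) - s X + d * Δx = s (X - Δx) - s X - d * (-Δx) by ring]
    calc |s (X - Δx) - s X - d * (-Δx)| ≤ M * (-Δx)^2 := this
      _ = M * Δx^2 := by ring
  rw [abs_le] at hE0 hEp hEm hT1 hT2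
  -- slope estimates
  set b₁ : ℝ := (Sbar (j+1) - Sbar j) / Δx with hb₁
  set b₂ : ℝ := (Sbar (j+1) - Sbar (j-1)) / (2*Δx) with hb₂
  set b₃ : ℝ := (Sbar j - Sbar (j-1)) / Δx with hb₃
  have hB1 : |b₁ - d| ≤ 2 * M * Δx := by
    rw [hb₁, div_sub' (ne_of_gt hΔx), abs_div, abs_of_pos hΔx,
      div_le_iff₀ hΔx, abs_le]
    constructor <;> nlinarith
  have hB3 : |b₃ - d| ≤ 2 * M * Δx := by
    rw [hb₃, div_sub' (ne_of_gt hΔx), abs_div, abs_of_pos hΔx,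
      div_le_iff₀ hΔx, abs_le]
    constructor <;> nlinarith
  have hB2 : |b₂ - d| ≤ 2 * M * Δx := by
    have h2Δx : (0:ℝ) < 2*Δx := by linarith
    rw [hb₂, div_sub' (ne_of_gt h2Δx), abs_div, abs_of_pos h2Δx,
      div_le_iff₀ h2Δx, abs_le]
    constructor <;> nlinarith
  have hkey := minmod_close θ (2*M*Δx) d b₁ b₂ b₃ hθ hB1 hB2 hB3
  have harg1 : θ * (Sbar (j+1) - Sbar j) / Δx = θ * b₁ := by rw [hb₁]; ring
  have harg3 : θ * (Sbar j - Sbar (j-1)) / Δx = θ * b₃ := by rw [hb₃]; ring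
  rw [harg1, harg3]
  calc |minmod (θ * b₁) b₂ (θ * b₃) - d| ≤ 2*M*Δx := hkey
    _ ≤ 5*θ*M*Δx := by nlinarith
end

section
/- Let Δx > 0 and 1 ≤ θ ≤ 2. Let (S̄_j)_{j∈ℤ} be any real sequence and define the minmod slope σ_j := MM( θ(S̄_{j+1} − S̄_j)/Δx , (S̄_{j+1} − S̄_{j−1})/(2Δx) , θ(S̄_j − S̄_{j−1})/Δx ). Then for every j the two interface values of the reconstructed linear profile, S̄_j + (Δx/2)σ_j and S̄_j − (Δx/2)σ_j, both lie in the interval [min{S̄_{j−1}, S̄_j, S̄_{j+1}}, max{S̄_{j−1}, S̄_j, S̄_{j+1}}]; i.e., the minmod limiter guarantees the nonoscillatory property of the reconstruction (no new extrema are created at cell interfaces). -/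
lemma minmod_key (Δx θ a b : ℝ) (hΔx : 0 < Δx) (hθ₁ : 1 ≤ θ) (hθ₂ : θ ≤ 2) :
    (0 ≤ Δx/2 * minmod (θ * a / Δx) ((a + b) / (2*Δx)) (θ * b / Δx) ∧
      Δx/2 * minmod (θ * a / Δx) ((a + b) / (2*Δx)) (θ * b / Δx) ≤ a ∧
      Δx/2 * minmod (θ * a / Δx) ((a + b) / (2*Δx)) (θ * b / Δx) ≤ b) ∨
    (Δx/2 * minmod (θ * a / Δx) ((a + b) / (2*Δx)) (θ * b / Δx) ≤ 0 ∧
      a ≤ Δx/2 * minmod (θ * a / Δx) ((a + b) / (2*Δx)) (θ * b / Δx) ∧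
      b ≤ Δx/2 * minmod (θ * a / Δx) ((a + b) / (2*Δx)) (θ * b / Δx)) ∨
    Δx/2 * minmod (θ * a / Δx) ((a + b) / (2*Δx)) (θ * b / Δx) = 0 := by
  unfold minmod
  split_ifs with h1 h2
  · obtain ⟨p1, p2, p3⟩ := h1
    have ha : 0 < θ * a := by
      have := (lt_div_iff₀ hΔx).mp p1; linarith
    have hb : 0 < θ * b := by
      have := (lt_div_iff₀ hΔx).mp p3; linarith
    have ha' : 0 < a := by nlinarith
    have hb' : 0 < b := by nlinarith
    left
    have hmA : min (θ * a / Δx) (min ((a + b) / (2*Δx)) (θ * b / Δx)) ≤ θ * a / Δx :=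
      min_le_left _ _
    have hmC : min (θ * a / Δx) (min ((a + b) / (2*Δx)) (θ * b / Δx)) ≤ θ * b / Δx :=
      le_trans (min_le_right _ _) (min_le_right _ _)
    have hm0 : 0 < min (θ * a / Δx) (min ((a + b) / (2*Δx)) (θ * b / Δx)) :=
      lt_min p1 (lt_min p2 p3)
    have hhalf : (0:ℝ) ≤ Δx/2 := by linarith
    refine ⟨by positivity, ?_, ?_⟩
    · have := mul_le_mul_of_nonneg_left hmA hhalf
      have heq : Δx/2 * (θ * a / Δx) = θ * a / 2 := by field_simp
      nlinarith
    · have := mul_le_mul_of_nonneg_left hmC hhalf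
      have heq : Δx/2 * (θ * b / Δx) = θ * b / 2 := by field_simp
      nlinarith
  · obtain ⟨p1, p2, p3⟩ := h2
    have ha : θ * a < 0 := by
      have := (div_lt_iff₀ hΔx).mp p1; linarith
    have hb : θ * b < 0 := by
      have := (div_lt_iff₀ hΔx).mp p3; linarith
    have ha' : a < 0 := by nlinarith
    have hb' : b < 0 := by nlinarith
    right; left
    have hmA : θ * a / Δx ≤ max (θ * a / Δx) (max ((a + b) / (2*Δx)) (θ * b / Δx)) :=
      le_max_left _ _
    have hmC : θ * b / Δx ≤ max (θ * a / Δx) (max ((a + b) / (2*Δx)) (θ * b / Δx)) :=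
      le_trans (le_max_right _ _) (le_max_right _ _)
    have hm0 : max (θ * a / Δx) (max ((a + b) / (2*Δx)) (θ * b / Δx)) < 0 :=
      max_lt p1 (max_lt p2 p3)
    have hhalf : (0:ℝ) ≤ Δx/2 := by linarith
    refine ⟨?_, ?_, ?_⟩
    · nlinarith
    · have := mul_le_mul_of_nonneg_left hmA hhalf
      have heq : Δx/2 * (θ * a / Δx) = θ * a / 2 := by field_simp
      nlinarith
    · have := mul_le_mul_of_nonneg_left hmC hhalf
      have heq : Δx/2 * (θ * b / Δx) = θ * b / 2 := by field_simp
      nlinarith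
  · right; right; ring

/-- Nonoscillatory property of the minmod-limited reconstruction: for `1 ≤ θ ≤ 2`,
the two interface values `S̄_j ± (Δx/2)σ_j` of the reconstructed linear profile lie
between `min{S̄_{j−1}, S̄_j, S̄_{j+1}}` and `max{S̄_{j−1}, S̄_j, S̄_{j+1}}`;
no new extrema are created at cell interfaces. -/
theorem minmod_reconstruction_nonoscillatory
    (Δx θ : ℝ) (hΔx : 0 < Δx) (hθ₁ : 1 ≤ θ) (hθ₂ : θ ≤ 2)
    (S : ℤ → ℝ) (j : ℤ) :
    (S j + (Δx/2) * minmod (θ * (S (j+1) - S j) / Δx)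
        ((S (j+1) - S (j-1)) / (2*Δx)) (θ * (S j - S (j-1)) / Δx)
      ∈ Set.Icc (min (S (j-1)) (min (S j) (S (j+1))))
                (max (S (j-1)) (max (S j) (S (j+1))))) ∧
    (S j - (Δx/2) * minmod (θ * (S (j+1) - S j) / Δx)
        ((S (j+1) - S (j-1)) / (2*Δx)) (θ * (S j - S (j-1)) / Δx)
      ∈ Set.Icc (min (S (j-1)) (min (S j) (S (j+1))))
                (max (S (j-1)) (max (S j) (S (j+1))))) := by
  have key := minmod_key Δx θ (S (j+1) - S j) (S j - S (j-1)) hΔx hθ₁ hθ₂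
  have harg : S (j+1) - S j + (S j - S (j-1)) = S (j+1) - S (j-1) := by ring
  rw [harg] at key
  have h1 : min (S (j-1)) (min (S j) (S (j+1))) ≤ S (j-1) := min_le_left _ _
  have h2 : min (S (j-1)) (min (S j) (S (j+1))) ≤ S j :=
    le_trans (min_le_right _ _) (min_le_left _ _)
  have h3 : min (S (j-1)) (min (S j) (S (j+1))) ≤ S (j+1) :=
    le_trans (min_le_right _ _) (min_le_right _ _)
  have h4 : S (j-1) ≤ max (S (j-1)) (max (S j) (S (j+1))) := le_max_left _ _
  have h5 : S j ≤ max (S (j-1)) (max (S j) (S (j+1))) :=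
    le_trans (le_max_left _ _) (le_max_right _ _)
  have h6 : S (j+1) ≤ max (S (j-1)) (max (S j) (S (j+1))) :=
    le_trans (le_max_right _ _) (le_max_right _ _)
  rcases key with ⟨k1, k2, k3⟩ | ⟨k1, k2, k3⟩ | k0 <;>
    exact ⟨⟨by linarith, by linarith⟩, ⟨by linarith, by linarith⟩⟩
end
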